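/- Let A be a unital Banach algebra contained in a unital Banach algebra B with 1_A possibly ≠ 1_B, such that every element of A accretive in A is accretive in B. If x ∈ A is accretive, then x is invertible in B if and only if the closed subalgebra generated by x contains 1_B, and in this case the support idempotent s(x) equals 1_B. -/

import Mathlib

open MeasureTheory Filter

/-- The fractional power of `x` given by the Balakrishnan representation
`x^α = (sin(απ)/π) ∫₀^∞ t^{α−1} (t+x)⁻¹ x dt`. -/
noncomputable def balPow {B : Type*} [NormedRing B] [NormedSpace ℝ B]
    (x : B) (α : ℝ) : B :=
  (Real.sin (α * Real.pi) / Real.pi) •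
    ∫ t in Set.Ioi (0 : ℝ), t ^ (α - 1) • (Ring.inverse (t • (1 : B) + x) * x)

/-- The `NormedSpace ℂ` structure on a closed non-unital subalgebra, restricted from `B`
(instance search no longer finds it by itself). -/
noncomputable instance nonUnitalSubalgebraNormedSpaceComplex {B : Type*} [NormedRing B]
    [NormedAlgebra ℂ B] (S : NonUnitalSubalgebra ℂ B) : NormedSpace ℂ S :=
  SubmoduleClass.toNormedSpace (R := ℂ) S



section Aux

lemma mem_topClosure_of_dual {E : Type*} [NormedAddCommGroup E] [NormedSpace ℂ E]
    (M : Submodule ℂ E) {b : E}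
    (h : ∀ φ : StrongDual ℂ E, (∀ m ∈ M, φ m = 0) → φ b = 0) :
    b ∈ M.topologicalClosure := by
  by_contra hb
  set N := M.topologicalClosure with hN
  haveI : IsClosed (N : Set E) := M.isClosed_topologicalClosure
  have hq : (Submodule.Quotient.mk b : E ⧸ N) ≠ 0 := by
    simpa [Submodule.Quotient.mk_eq_zero] using hb
  obtain ⟨g, -, hg2⟩ := exists_dual_vector ℂ _ (norm_ne_zero_iff.mpr hq)
  let q : E →L[ℂ] E ⧸ N := LinearMap.mkContinuous N.mkQ 1 (fun m => by
      simpa using Submodule.Quotient.norm_mk_le N m)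
  have hφ := h (g.comp q) (fun m hm => by
    have hm' : N.mkQ m = 0 := by
      simpa [Submodule.Quotient.mk_eq_zero] using M.le_topologicalClosure hm
    simp only [ContinuousLinearMap.comp_apply]
    have : q m = N.mkQ m := rfl
    rw [this, hm', map_zero])
  have : g (Submodule.Quotient.mk b) = 0 := by
    exact hφ
  rw [hg2] at this
  exact hq (by simpa [norm_eq_zero] using (Complex.ofReal_eq_zero.mp this))

variable {B : Type*} [NormedRing B] [NormedAlgebra ℂ B] [NormOneClass B] [CompleteSpace B]

lemma one_ne_zero'' : (1:B) ≠ 0 := by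
  intro h
  have h1 : ‖(1:B)‖ = 1 := norm_one
  rw [h, norm_zero] at h1
  exact zero_ne_one h1

lemma res_bound {x : B}
    (hB : ∀ ψ : StrongDual ℂ B, ‖ψ‖ = 1 → ψ 1 = 1 → 0 ≤ (ψ x).re)
    {z : ℂ} (hz : 0 < z.re) (hu : IsUnit (z • (1:B) + x)) :
    ‖Ring.inverse (z • (1:B) + x)‖ ≤ 1 / z.re := by
  set R := Ring.inverse (z • (1:B) + x) with hRdef
  have hmul : (z • (1:B) + x) * R = 1 := Ring.mul_inverse_cancel _ hu
  have hRne : R ≠ 0 := by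
    intro h
    rw [h, mul_zero] at hmul
    exact one_ne_zero'' hmul.symm
  have hRpos : 0 < ‖R‖ := norm_pos_iff.mpr hRne
  obtain ⟨f, hf1, hf2'⟩ := exists_dual_vector ℂ R (norm_ne_zero_iff.mpr hRne)
  have hf2 : f R = ((‖R‖ : ℝ) : ℂ) := hf2'
  set ψ : StrongDual ℂ B :=
    ((‖R‖⁻¹ : ℝ) : ℂ) • f.comp ((ContinuousLinearMap.mul ℂ B).flip R) with hψdef
  have hψapp : ∀ b, ψ b = ((‖R‖⁻¹ : ℝ) : ℂ) * f (b * R) := fun b => rfl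
  have hψ1 : ψ 1 = 1 := by
    rw [hψapp, one_mul, hf2]
    norm_cast
    exact inv_mul_cancel₀ hRpos.ne'
  have hψnorm_le : ‖ψ‖ ≤ 1 := by
    refine ContinuousLinearMap.opNorm_le_bound _ zero_le_one (fun b => ?_)
    rw [hψapp, norm_mul]
    have h1 : ‖f (b * R)‖ ≤ ‖b‖ * ‖R‖ := by
      calc ‖f (b * R)‖ ≤ ‖f‖ * ‖b * R‖ := f.le_opNorm _
        _ = ‖b * R‖ := by rw [hf1, one_mul]
        _ ≤ ‖b‖ * ‖R‖ := norm_mul_le _ _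
    have h2 : ‖((‖R‖⁻¹ : ℝ) : ℂ)‖ = ‖R‖⁻¹ := by
      simp [abs_of_nonneg (inv_nonneg.mpr (norm_nonneg R))]
    rw [h2]
    calc ‖R‖⁻¹ * ‖f (b * R)‖ ≤ ‖R‖⁻¹ * (‖b‖ * ‖R‖) := by
          exact mul_le_mul_of_nonneg_left h1 (inv_nonneg.mpr (norm_nonneg R))
      _ = ‖b‖ := by field_simp
      _ ≤ 1 * ‖b‖ := by rw [one_mul]
  have hψnorm : ‖ψ‖ = 1 := by
    refine le_antisymm hψnorm_le ?_
    have := ψ.le_opNorm 1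
    rw [hψ1, norm_one] at this
    simpa using this
  have hre := hB ψ hψnorm hψ1
  -- compute ψ x
  have hxR : x * R = 1 - z • R := by
    have : z • R + x * R = 1 := by
      calc z • R + x * R = (z • (1:B) + x) * R := by
            rw [add_mul, smul_mul_assoc, one_mul]
        _ = 1 := hmul
    linear_combination (norm := module) this
  have hψx : ψ x = ((‖R‖⁻¹ : ℝ) : ℂ) * f 1 - z := by
    rw [hψapp, hxR, map_sub, f.map_smul, hf2, smul_eq_mul, mul_sub]
    congr 1
    rw [← mul_assoc, mul_comm (((‖R‖⁻¹:ℝ)):ℂ) z, mul_assoc]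
    have hc : (((‖R‖⁻¹:ℝ)):ℂ) * ((‖R‖:ℝ):ℂ) = 1 := by
      norm_cast
      exact inv_mul_cancel₀ hRpos.ne'
    rw [hc, mul_one]
  have hre2 : z.re ≤ ‖R‖⁻¹ := by
    have h3 : (ψ x).re = ‖R‖⁻¹ * (f 1).re - z.re := by
      rw [hψx, Complex.sub_re, Complex.re_ofReal_mul]
    have h4 : ‖R‖⁻¹ * (f 1).re ≤ ‖R‖⁻¹ := by
      have h5 : (f 1).re ≤ 1 := by
        calc (f 1).re ≤ ‖f 1‖ := Complex.re_le_norm _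
          _ = ‖f 1‖ := rfl
          _ ≤ ‖f‖ * ‖(1:B)‖ := f.le_opNorm _
          _ = 1 := by rw [hf1, norm_one, one_mul]
      calc ‖R‖⁻¹ * (f 1).re ≤ ‖R‖⁻¹ * 1 :=
            mul_le_mul_of_nonneg_left h5 (inv_nonneg.mpr (norm_nonneg R))
        _ = ‖R‖⁻¹ := mul_one _
    rw [h3] at hre
    linarith
  rw [le_div_iff₀ hz]
  calc ‖R‖ * z.re ≤ ‖R‖ * ‖R‖⁻¹ := mul_le_mul_of_nonneg_left hre2 (norm_nonneg R)
    _ = 1 := mul_inv_cancel₀ hRpos.ne'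

end Aux

section Aux2

variable {B : Type*} [NormedRing B] [NormedAlgebra ℂ B] [NormOneClass B] [CompleteSpace B]

lemma isUnit_res {x : B}
    (hB : ∀ ψ : StrongDual ℂ B, ‖ψ‖ = 1 → ψ 1 = 1 → 0 ≤ (ψ x).re)
    {z : ℂ} (hz : 0 < z.re) : IsUnit (z • (1:B) + x) := by
  set T : ℝ := ‖x‖ + ‖z‖ + 1 with hT
  have hT0 : 0 < T := by positivity
  set w : ℂ := z + T with hw
  have hwre : 0 < w.re := by
    rw [hw, Complex.add_re, Complex.ofReal_re]
    linarith
  have habs : ‖x‖ + 1 ≤ ‖w‖ := by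
    have h1 : ‖(T:ℂ)‖ - ‖-z‖ ≤ ‖(T:ℂ) - (-z)‖ := norm_sub_norm_le _ _
    have h2 : ‖(T:ℂ)‖ = T := by
      rw [Complex.norm_real, Real.norm_eq_abs, abs_of_pos hT0]
    have h3 : (T:ℂ) - (-z) = w := by rw [hw]; ring
    rw [h2, h3, norm_neg] at h1
    have h4 : ‖z‖ ≥ 0 := norm_nonneg z
    linarith
  have hwpos : 0 < ‖w‖ := by
    have := norm_nonneg x; linarith
  have hw0 : w ≠ 0 := by
    intro h; rw [h, norm_zero] at hwpos; exact lt_irrefl _ hwpos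
  have hscal : IsUnit (w • (1:B)) := by
    rw [← Algebra.algebraMap_eq_smul_one]
    exact (hw0.isUnit).map (algebraMap ℂ B)
  have h1u : IsUnit (1 + w⁻¹ • x) := by
    have hn : ‖-(w⁻¹ • x)‖ < 1 := by
      rw [norm_neg, norm_smul, norm_inv]
      rw [inv_mul_lt_iff₀ hwpos, mul_one]
      linarith
    have := isUnit_one_sub_of_norm_lt_one hn
    rwa [sub_neg_eq_add] at this
  have heq : w • (1:B) + x = (w • (1:B)) * (1 + w⁻¹ • x) := by
    rw [mul_add, mul_one, smul_mul_assoc, one_mul, smul_smul, mul_inv_cancel₀ hw0, one_smul]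
  have hwunit : IsUnit (w • (1:B) + x) := by
    rw [heq]; exact hscal.mul h1u
  have hbw := res_bound hB hwre hwunit
  set Rw := Ring.inverse (w • (1:B) + x) with hRw
  have hTR : ‖(T:ℂ) • Rw‖ < 1 := by
    rw [norm_smul]
    have h1 : ‖(T:ℂ)‖ = T := by
      rw [Complex.norm_real, Real.norm_eq_abs, abs_of_pos hT0]
    rw [h1]
    have h2 : T * ‖Rw‖ ≤ T * (1 / w.re) := mul_le_mul_of_nonneg_left hbw hT0.le
    have h3 : T * (1 / w.re) < 1 := by
      rw [mul_one_div, div_lt_one hwre]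
      have h4 : w.re = z.re + T := by rw [hw, Complex.add_re, Complex.ofReal_re]
      linarith
    exact lt_of_le_of_lt h2 h3
  have h2u : IsUnit (1 - (T:ℂ) • Rw) := isUnit_one_sub_of_norm_lt_one hTR
  have heq2 : z • (1:B) + x = (w • (1:B) + x) * (1 - (T:ℂ) • Rw) := by
    rw [mul_sub, mul_one, mul_smul_comm, Ring.mul_inverse_cancel _ hwunit]
    have h5 : w • (1:B) - (T:ℂ) • (1:B) = z • (1:B) := by
      rw [← sub_smul]
      congr 1
      rw [hw]; ring
    rw [add_sub_right_comm, h5]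
  rw [heq2]
  exact hwunit.mul h2u

lemma real_smul_one {t : ℝ} : ((t : ℂ)) • (1:B) = t • (1:B) := by
  rw [show ((t:ℂ)) = algebraMap ℝ ℂ t from rfl, algebraMap_smul]

lemma isUnit_res_real {x : B}
    (hB : ∀ ψ : StrongDual ℂ B, ‖ψ‖ = 1 → ψ 1 = 1 → 0 ≤ (ψ x).re)
    {t : ℝ} (ht : 0 < t) : IsUnit (t • (1:B) + x) := by
  have := isUnit_res hB (z := (t:ℂ)) (by simpa using ht)
  rwa [real_smul_one] at this

lemma res_bound_real {x : B}
    (hB : ∀ ψ : StrongDual ℂ B, ‖ψ‖ = 1 → ψ 1 = 1 → 0 ≤ (ψ x).re)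
    {t : ℝ} (ht : 0 < t) : ‖Ring.inverse (t • (1:B) + x)‖ ≤ 1 / t := by
  have h1 := res_bound hB (z := (t:ℂ)) (by simpa using ht)
    (by rw [real_smul_one]; exact isUnit_res_real hB ht)
  rw [real_smul_one] at h1
  simpa using h1

end Aux2

section Aux3

variable {B : Type*} [NormedRing B] [NormedAlgebra ℂ B] [NormOneClass B] [CompleteSpace B]

lemma real_smul_mem' (M : Submodule ℂ B) (r : ℝ) {m : B} (hm : m ∈ M) : r • m ∈ M := by
  rw [show (r • m) = ((r:ℂ) • m) from (by
    rw [show ((r:ℂ)) = algebraMap ℝ ℂ r from rfl, algebraMap_smul])]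
  exact M.smul_mem _ hm

lemma pow_succ_mem' (x : B) (n : ℕ) : x ^ (n+1) ∈ NonUnitalAlgebra.adjoin ℂ {x} := by
  induction n with
  | zero => simpa using NonUnitalAlgebra.subset_adjoin ℂ (Set.mem_singleton x)
  | succ n ih =>
    rw [pow_succ]
    exact mul_mem ih (NonUnitalAlgebra.subset_adjoin ℂ (Set.mem_singleton x))

lemma mem_of_big {x : B} {t : ℝ} (ht : ‖x‖ < t) :
    Ring.inverse (t • (1:B) + x) * x ∈
      (NonUnitalAlgebra.adjoin ℂ {x} : NonUnitalSubalgebra ℂ B).toSubmodule.topologicalClosure := by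
  have ht0 : 0 < t := lt_of_le_of_lt (norm_nonneg x) ht
  set a : B := -(t⁻¹ • x) with ha
  have hanorm : ‖a‖ < 1 := by
    rw [ha, norm_neg, norm_smul, norm_inv, Real.norm_eq_abs, abs_of_pos ht0,
      inv_mul_lt_iff₀ ht0, mul_one]
    exact ht
  set st : Bˣ := ⟨t • (1:B), t⁻¹ • (1:B),
    by rw [smul_mul_smul_comm, mul_inv_cancel₀ ht0.ne', mul_one, one_smul],
    by rw [smul_mul_smul_comm, inv_mul_cancel₀ ht0.ne', mul_one, one_smul]⟩ with hst
  set u : Bˣ := Units.oneSub a hanorm with hu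
  have hval : t • (1:B) + x = ↑(st * u) := by
    show t • (1:B) + x = (t • (1:B)) * (1 - a)
    rw [smul_mul_assoc, one_mul, smul_sub, ha, smul_neg, smul_smul,
      mul_inv_cancel₀ ht0.ne', one_smul, sub_neg_eq_add]
  have hinv : Ring.inverse (t • (1:B) + x) = t⁻¹ • (∑' n : ℕ, a ^ n) := by
    rw [hval, Ring.inverse_unit, mul_inv_rev]
    show ((↑(u⁻¹) : B) * ↑(st⁻¹) : B) = _
    have h1 : (↑(u⁻¹) : B) = ∑' n : ℕ, a ^ n := rfl
    have h2 : (↑(st⁻¹) : B) = t⁻¹ • (1:B) := rfl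
    rw [h1, h2, mul_smul_comm, mul_one]
  rw [hinv, smul_mul_assoc]
  apply real_smul_mem'
  have hsum : HasSum (fun n : ℕ => a ^ n * x) ((∑' n : ℕ, a ^ n) * x) :=
    (summable_geometric_of_norm_lt_one hanorm).hasSum.mul_right x
  have hmem : ∀ n : ℕ, a ^ n * x ∈
      (NonUnitalAlgebra.adjoin ℂ {x} : NonUnitalSubalgebra ℂ B).toSubmodule := by
    intro n
    have h1 : a ^ n * x = ((-t⁻¹) ^ n : ℝ) • x ^ (n+1) := by
      rw [ha, show (-(t⁻¹ • x)) = ((-t⁻¹ : ℝ) • x) from (by rw [neg_smul]),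
        smul_pow, smul_mul_assoc, pow_succ]
    rw [h1]
    exact real_smul_mem' _ _ (pow_succ_mem' x n)
  have htends := hsum.tendsto_sum_nat
  have hclosed : IsClosed
      ((NonUnitalAlgebra.adjoin ℂ {x} : NonUnitalSubalgebra ℂ B).toSubmodule.topologicalClosure
        : Set B) :=
    Submodule.isClosed_topologicalClosure _
  refine hclosed.mem_of_tendsto htends (Filter.Eventually.of_forall (fun N => ?_))
  exact sum_mem (fun n _ => Submodule.le_topologicalClosure _ (hmem n))

end Aux3

section Aux4

variable {B : Type*} [NormedRing B] [NormedAlgebra ℂ B] [NormOneClass B] [CompleteSpace B]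

lemma mem_res_mul {x : B}
    (hB : ∀ ψ : StrongDual ℂ B, ‖ψ‖ = 1 → ψ 1 = 1 → 0 ≤ (ψ x).re)
    {t : ℝ} (ht : 0 < t) :
    Ring.inverse (t • (1:B) + x) * x ∈
      (NonUnitalAlgebra.adjoin ℂ {x} : NonUnitalSubalgebra ℂ B).toSubmodule.topologicalClosure := by
  apply mem_topClosure_of_dual
  intro φ hφ
  have hφc : ∀ m ∈ (NonUnitalAlgebra.adjoin ℂ {x} :
      NonUnitalSubalgebra ℂ B).toSubmodule.topologicalClosure, φ m = 0 := by
    intro m hm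
    have hsub : ((NonUnitalAlgebra.adjoin ℂ {x} :
        NonUnitalSubalgebra ℂ B).toSubmodule : Set B) ⊆ φ ⁻¹' {0} := fun p hp => hφ p hp
    have hcl : closure ((NonUnitalAlgebra.adjoin ℂ {x} :
        NonUnitalSubalgebra ℂ B).toSubmodule : Set B) ⊆ φ ⁻¹' {0} :=
      closure_minimal hsub (IsClosed.preimage φ.continuous isClosed_singleton)
    rw [← Submodule.topologicalClosure_coe] at hcl
    exact hcl hm
  set g : ℂ → ℂ := fun z => φ (Ring.inverse (z • (1:B) + x) * x) with hg
  set U : Set ℂ := {z : ℂ | 0 < z.re} with hU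
  have hUopen : IsOpen U := isOpen_lt continuous_const Complex.continuous_re
  have hUconn : IsPreconnected U := (convex_halfSpace_re_gt 0).isPreconnected
  have hganal : AnalyticOnNhd ℂ g U := by
    intro z hz
    have hzu : IsUnit (z • (1:B) + x) := isUnit_res hB hz
    have h1 : AnalyticAt ℂ (fun w : ℂ => w • (1:B) + x) z :=
      (analyticAt_id.smul analyticAt_const).add analyticAt_const
    have h2 : AnalyticAt ℂ (fun w : ℂ => Ring.inverse (w • (1:B) + x)) z := by
      have h3 := analyticAt_inverse (𝕜 := ℂ) hzu.unit
      rw [IsUnit.unit_spec] at h3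
      have h4 : AnalyticAt ℂ (Ring.inverse ∘ (fun w : ℂ => w • (1:B) + x)) z :=
        AnalyticAt.comp (g := (Ring.inverse : B → B)) (f := fun w : ℂ => w • (1:B) + x)
          (x := z) h3 h1
      exact h4
    exact (φ.analyticAt _).comp (h2.mul analyticAt_const)
  have hmemzero : ∀ s : ℝ, ‖x‖ < s → g s = 0 := by
    intro s hs
    have h1 := mem_of_big (x := x) hs
    rw [hg]
    simp only
    rw [real_smul_one]
    exact hφc _ h1
  set z₀ : ℂ := ((‖x‖ + 1 : ℝ) : ℂ) with hz₀
  have hz₀U : z₀ ∈ U := by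
    rw [hU, hz₀]
    simp only [Set.mem_setOf_eq, Complex.ofReal_re]
    positivity
  have hfreq : ∃ᶠ z in nhdsWithin z₀ {z₀}ᶜ, g z = 0 := by
    have hseq : Filter.Tendsto (fun n : ℕ => ((‖x‖ + 1 + 1/(n+1) : ℝ) : ℂ)) Filter.atTop
        (nhdsWithin z₀ {z₀}ᶜ) := by
      rw [tendsto_nhdsWithin_iff]
      constructor
      · have hre : Filter.Tendsto (fun n : ℕ => (‖x‖ + 1 + 1/(n+1) : ℝ)) Filter.atTop
            (nhds (‖x‖ + 1)) := by
          have := tendsto_one_div_add_atTop_nhds_zero_nat (𝕜 := ℝ)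
          have h2 := Filter.Tendsto.const_add (‖x‖ + 1) this
          simpa using h2
        exact (Complex.continuous_ofReal.tendsto _).comp hre
      · refine Filter.Eventually.of_forall (fun n => ?_)
        simp only [Set.mem_compl_iff, Set.mem_singleton_iff, hz₀]
        intro h
        have h2 : (‖x‖ + 1 + 1/(n+1) : ℝ) = ‖x‖ + 1 := Complex.ofReal_inj.mp h
        have h3 : (0:ℝ) < 1/(n+1) := by positivity
        linarith
    refine hseq.frequently (Filter.Frequently.of_forall (fun n => ?_))
    have h4 : ‖x‖ < ‖x‖ + 1 + 1/(n+1) := by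
      have h3 : (0:ℝ) < 1/(n+1) := by positivity
      linarith
    exact hmemzero _ h4
  have heq := hganal.eqOn_zero_of_preconnected_of_frequently_eq_zero hUconn hz₀U hfreq
  have htU : ((t : ℝ) : ℂ) ∈ U := by
    simp only [hU, Set.mem_setOf_eq, Complex.ofReal_re]
    exact ht
  have hgt : g t = 0 := heq htU
  rw [hg] at hgt
  simp only at hgt
  rwa [real_smul_one] at hgt

end Aux4

section Aux5

variable {B : Type*} [NormedRing B] [NormedAlgebra ℂ B] [NormOneClass B] [CompleteSpace B]

lemma res_small {x : B} (hxu : IsUnit x) {t : ℝ} (ht : 0 < t)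
    (hts : t * ‖(↑hxu.unit⁻¹ : B)‖ ≤ 1/2) :
    ‖Ring.inverse (t • (1:B) + x)‖ ≤ 2 * ‖(↑hxu.unit⁻¹ : B)‖ := by
  set y := (↑hxu.unit⁻¹ : B) with hy
  have hxy : x * y = 1 := hxu.mul_val_inv
  set aa : B := -(t • y) with haa
  have hn : ‖aa‖ < 1 := by
    rw [haa, norm_neg, norm_smul, Real.norm_eq_abs, abs_of_pos ht]
    linarith
  set v : Bˣ := Units.oneSub aa hn with hv
  have hval : t • (1:B) + x = ↑(hxu.unit * v) := by
    show t • (1:B) + x = x * (1 - aa)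
    rw [haa, sub_neg_eq_add, mul_add, mul_one, mul_smul_comm, hxy, add_comm]
  have hinv : Ring.inverse (t • (1:B) + x) = (∑' n : ℕ, aa ^ n) * y := by
    rw [hval, Ring.inverse_unit, mul_inv_rev]
    rfl
  rw [hinv]
  have h1 : ‖(∑' n : ℕ, aa ^ n)‖ ≤ 2 := by
    have h2 := tsum_geometric_le_of_norm_lt_one aa hn
    rw [norm_one] at h2
    have h3 : ‖aa‖ ≤ 1/2 := by
      rw [haa, norm_neg, norm_smul, Real.norm_eq_abs, abs_of_pos ht]
      exact hts
    have h4 : (1 - ‖aa‖)⁻¹ ≤ 2 := by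
      rw [inv_le_comm₀ (by linarith) (by norm_num)]
      linarith
    linarith
  calc ‖(∑' n : ℕ, aa ^ n) * y‖ ≤ ‖(∑' n : ℕ, aa ^ n)‖ * ‖y‖ := norm_mul_le _ _
    _ ≤ 2 * ‖y‖ := mul_le_mul_of_nonneg_right h1 (norm_nonneg y)

end Aux5

section Aux6

variable {B : Type*} [NormedRing B] [NormedAlgebra ℂ B] [NormOneClass B] [CompleteSpace B]

lemma res_K {x : B}
    (hB : ∀ ψ : StrongDual ℂ B, ‖ψ‖ = 1 → ψ 1 = 1 → 0 ≤ (ψ x).re)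
    (hxu : IsUnit x) {t : ℝ} (ht : 0 < t) :
    ‖Ring.inverse (t • (1:B) + x)‖ ≤ 2 * ‖(↑hxu.unit⁻¹ : B)‖ + 2 := by
  set y := (↑hxu.unit⁻¹ : B) with hy
  by_cases h : t * ‖y‖ ≤ 1/2
  · have := res_small hxu ht h
    linarith
  · push_neg at h
    have h2 : 1 / t ≤ 2 * ‖y‖ := by
      rw [div_le_iff₀ ht]
      nlinarith
    have h3 := res_bound_real hB ht
    linarith

lemma one_mem_closure {x : B}
    (hB : ∀ ψ : StrongDual ℂ B, ‖ψ‖ = 1 → ψ 1 = 1 → 0 ≤ (ψ x).re)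
    (hxu : IsUnit x) :
    (1 : B) ∈ closure ((NonUnitalAlgebra.adjoin ℂ {x} : NonUnitalSubalgebra ℂ B) : Set B) := by
  set K := 2 * ‖(↑hxu.unit⁻¹ : B)‖ + 2 with hK
  have hK0 : 0 ≤ K := by positivity
  have hsetEq : (((NonUnitalAlgebra.adjoin ℂ {x} :
      NonUnitalSubalgebra ℂ B).toSubmodule.topologicalClosure : Submodule ℂ B) : Set B) =
      closure ((NonUnitalAlgebra.adjoin ℂ {x} : NonUnitalSubalgebra ℂ B) : Set B) := by
    rw [Submodule.topologicalClosure_coe]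
    rfl
  have hFmem : ∀ n : ℕ, Ring.inverse ((1/(n+1) : ℝ) • (1:B) + x) * x ∈
      closure ((NonUnitalAlgebra.adjoin ℂ {x} : NonUnitalSubalgebra ℂ B) : Set B) := by
    intro n
    have h1 : (0:ℝ) < 1/(n+1) := by positivity
    have := mem_res_mul hB h1
    rw [← hsetEq]
    exact this
  have hbound : ∀ n : ℕ, ‖Ring.inverse ((1/(n+1) : ℝ) • (1:B) + x) * x - 1‖ ≤ K * (1/(n+1)) := by
    intro n
    set t : ℝ := 1/(n+1) with htdef
    have ht : (0:ℝ) < t := by positivity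
    have hmul : Ring.inverse (t • (1:B) + x) * (t • (1:B) + x) = 1 :=
      Ring.inverse_mul_cancel _ (isUnit_res_real hB ht)
    have h2 : Ring.inverse (t • (1:B) + x) * x - 1 =
        -(t • Ring.inverse (t • (1:B) + x)) := by
      have h3 : Ring.inverse (t • (1:B) + x) * x =
          1 - t • Ring.inverse (t • (1:B) + x) := by
        have h4 : t • Ring.inverse (t • (1:B) + x) + Ring.inverse (t • (1:B) + x) * x = 1 := by
          have h6 : Ring.inverse (t • (1:B) + x) * (t • (1:B) + x) =
              t • Ring.inverse (t • (1:B) + x) + Ring.inverse (t • (1:B) + x) * x := by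
            rw [mul_add, mul_smul_comm, mul_one]
          rw [← h6]
          exact hmul
        linear_combination (norm := module) h4
      rw [h3]
      module
    rw [h2, norm_neg, norm_smul, Real.norm_eq_abs, abs_of_pos ht]
    have h5 := res_K hB hxu ht
    calc t * ‖Ring.inverse (t • (1:B) + x)‖ ≤ t * K := by
          exact mul_le_mul_of_nonneg_left h5 ht.le
      _ = K * t := mul_comm _ _
  have htend0 : Filter.Tendsto (fun n : ℕ => K * (1/(n+1) : ℝ)) Filter.atTop (nhds 0) := by
    have := tendsto_one_div_add_atTop_nhds_zero_nat (𝕜 := ℝ)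
    have h2 := this.const_mul K
    simpa using h2
  have htend : Filter.Tendsto (fun n : ℕ => Ring.inverse ((1/(n+1) : ℝ) • (1:B) + x) * x)
      Filter.atTop (nhds 1) := by
    rw [← tendsto_sub_nhds_zero_iff]
    exact squeeze_zero_norm hbound htend0
  exact isClosed_closure.mem_of_tendsto htend (Filter.Eventually.of_forall hFmem)

lemma isUnit_of_one_mem {x u : B} (hu1 : u * x = x) (hu2 : x * u = x)
    (h1M : (1:B) ∈ closure ((NonUnitalAlgebra.adjoin ℂ {x} : NonUnitalSubalgebra ℂ B) : Set B)) :
    IsUnit x := by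
  obtain ⟨p, hpM, hpd⟩ := Metric.mem_closure_iff.mp h1M 1 one_pos
  rw [dist_eq_norm] at hpd
  have hPQ : ∃ q : B, q * x = p ∧ x * q = p := by
    refine NonUnitalAlgebra.adjoin_induction
      (fun w hw => ?_) (fun a b ha hb hqa hqb => ?_) ⟨0, by simp⟩
      (fun a b ha hb hqa hqb => ?_) (fun c a ha hqa => ?_) hpM
    · rw [Set.mem_singleton_iff] at hw
      subst hw
      exact ⟨u, hu1, hu2⟩
    · obtain ⟨qa, ha1, ha2⟩ := hqa
      obtain ⟨qb, hb1, hb2⟩ := hqb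
      exact ⟨qa + qb, by rw [add_mul, ha1, hb1], by rw [mul_add, ha2, hb2]⟩
    · obtain ⟨qa, ha1, ha2⟩ := hqa
      obtain ⟨qb, hb1, hb2⟩ := hqb
      have hbx : b * x = x * b := by
        conv_lhs => rw [← hb2]
        rw [mul_assoc, hb1]
      refine ⟨qa * b, ?_, ?_⟩
      · rw [mul_assoc, hbx, ← mul_assoc, ha1]
      · rw [← mul_assoc, ha2]
    · obtain ⟨qa, ha1, ha2⟩ := hqa
      exact ⟨c • qa, by rw [smul_mul_assoc, ha1], by rw [mul_smul_comm, ha2]⟩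
  obtain ⟨q, hq1, hq2⟩ := hPQ
  have hup : IsUnit p := by
    have := isUnit_one_sub_of_norm_lt_one hpd
    rwa [sub_sub_cancel] at this
  have hlx : (Ring.inverse p * q) * x = 1 := by
    rw [mul_assoc, hq1, Ring.inverse_mul_cancel _ hup]
  have hxr : x * (q * Ring.inverse p) = 1 := by
    rw [← mul_assoc, hq2, Ring.mul_inverse_cancel _ hup]
  have hlr : Ring.inverse p * q = q * Ring.inverse p := by
    calc Ring.inverse p * q
        = (Ring.inverse p * q) * (x * (q * Ring.inverse p)) := by rw [hxr, mul_one]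
      _ = ((Ring.inverse p * q) * x) * (q * Ring.inverse p) := by
          rw [mul_assoc, mul_assoc, mul_assoc]
      _ = q * Ring.inverse p := by rw [hlx, one_mul]
  exact ⟨⟨x, q * Ring.inverse p, hxr, by rw [← hlr]; exact hlx⟩, rfl⟩

end Aux6

section Aux7

variable {B : Type*} [NormedRing B] [NormedAlgebra ℂ B] [NormOneClass B] [CompleteSpace B]

lemma balPow_est {x : B}
    (hB : ∀ ψ : StrongDual ℂ B, ‖ψ‖ = 1 → ψ 1 = 1 → 0 ≤ (ψ x).re)
    (hxu : IsUnit x) {α : ℝ} (hα0 : 0 < α) (hα2 : α ≤ 1/2) :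
    ‖balPow x α - 1‖ ≤
      |Real.sin (α * Real.pi)| / Real.pi *
        (‖x - 1‖ * ((2 * ‖(↑hxu.unit⁻¹ : B)‖ + 2) + 2) + 3)
      + |Real.sin (α * Real.pi) / (Real.pi * α) - 1| := by
  have hπ := Real.pi_pos
  set K : ℝ := 2 * ‖(↑hxu.unit⁻¹ : B)‖ + 2 with hKdef
  have hK0 : (0:ℝ) ≤ K := by positivity
  have hK : ∀ t : ℝ, 0 < t → ‖Ring.inverse (t • (1:B) + x)‖ ≤ K :=
    fun t ht => res_K hB hxu ht
  have hα1 : α < 1 := lt_of_le_of_lt hα2 (by norm_num)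
  set R : ℝ → B := fun t => Ring.inverse (t • (1:B) + x) with hRdef
  set f₁ : ℝ → B := fun t => t ^ (α-1) • (R t * x) with hf₁
  set sc : ℝ → ℝ := fun t => t ^ (α-1) * (1+t)⁻¹ with hsc
  set f₂ : ℝ → B := fun t => sc t • (1:B) with hf₂
  -- continuity
  have hcontR : ContinuousOn (fun t : ℝ => R t * x) (Set.Ioi 0) := by
    intro t ht
    apply ContinuousAt.continuousWithinAt
    have hu := isUnit_res_real hB (Set.mem_Ioi.mp ht)
    have h1 : ContinuousAt (fun s : ℝ => s • (1:B) + x) t :=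
      ((continuous_id.smul continuous_const).add continuous_const).continuousAt
    have h2 : ContinuousAt Ring.inverse ((fun s : ℝ => s • (1:B) + x) t) := by
      have h3 := NormedRing.inverse_continuousAt hu.unit
      rwa [IsUnit.unit_spec] at h3
    have h4 : ContinuousAt (Ring.inverse ∘ (fun s : ℝ => s • (1:B) + x)) t :=
      ContinuousAt.comp (g := (Ring.inverse : B → B)) (f := fun s : ℝ => s • (1:B) + x) h2 h1
    exact h4.mul continuousAt_const
  have hrpowc : ContinuousOn (fun t : ℝ => t ^ (α-1)) (Set.Ioi 0) :=
    continuousOn_id.rpow_const (fun t ht => Or.inl (ne_of_gt (Set.mem_Ioi.mp ht)))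
  have hcont1 : ContinuousOn f₁ (Set.Ioi 0) := hrpowc.smul hcontR
  have hcontsc : ContinuousOn sc (Set.Ioi 0) := by
    apply hrpowc.mul
    apply ContinuousOn.inv₀ (continuous_const.add continuous_id).continuousOn
    intro t ht
    have := Set.mem_Ioi.mp ht
    exact ne_of_gt (show (0:ℝ) < 1 + t by linarith)
  -- integrability
  have hIoc_sub : Set.Ioc (0:ℝ) 1 ⊆ Set.Ioi 0 := Set.Ioc_subset_Ioi_self
  have hIoi_sub : Set.Ioi (1:ℝ) ⊆ Set.Ioi 0 := Set.Ioi_subset_Ioi zero_le_one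
  have hrpow_int : IntegrableOn (fun t : ℝ => t ^ (α-1)) (Set.Ioc 0 1) :=
    (intervalIntegral.intervalIntegrable_rpow' (by linarith)).1
  have hrpow2_int : IntegrableOn (fun t : ℝ => t ^ (α-2)) (Set.Ioi 1) :=
    integrableOn_Ioi_rpow_of_lt (by linarith) zero_lt_one
  have hsub21 : ∀ t : ℝ, 1 < t → t ^ (α-2) = t ^ (α-1) * t⁻¹ := by
    intro t ht
    have ht0 : (0:ℝ) < t := lt_trans zero_lt_one ht
    rw [show α-2 = (α-1) + (-1) by ring, Real.rpow_add ht0, Real.rpow_neg_one]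
  have hint1a : IntegrableOn f₁ (Set.Ioc 0 1) := by
    refine Integrable.mono' (hrpow_int.mul_const (K * ‖x‖))
      ((hcont1.mono hIoc_sub).aestronglyMeasurable measurableSet_Ioc) ?_
    refine (ae_restrict_iff' measurableSet_Ioc).mpr (Filter.Eventually.of_forall (fun t ht => ?_))
    rw [hf₁]
    simp only
    rw [norm_smul, Real.norm_eq_abs, abs_of_nonneg (Real.rpow_nonneg ht.1.le _)]
    have h1 : ‖R t * x‖ ≤ K * ‖x‖ := by
      calc ‖R t * x‖ ≤ ‖R t‖ * ‖x‖ := norm_mul_le _ _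
        _ ≤ K * ‖x‖ := mul_le_mul_of_nonneg_right (hK t ht.1) (norm_nonneg x)
    exact mul_le_mul_of_nonneg_left h1 (Real.rpow_nonneg ht.1.le _)
  have hint1b : IntegrableOn f₁ (Set.Ioi 1) := by
    refine Integrable.mono' (hrpow2_int.mul_const ‖x‖)
      ((hcont1.mono hIoi_sub).aestronglyMeasurable measurableSet_Ioi) ?_
    refine (ae_restrict_iff' measurableSet_Ioi).mpr (Filter.Eventually.of_forall (fun t ht => ?_))
    have ht1 : (1:ℝ) < t := Set.mem_Ioi.mp ht
    have ht0 : (0:ℝ) < t := lt_trans zero_lt_one ht1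
    rw [hf₁]
    simp only
    rw [norm_smul, Real.norm_eq_abs, abs_of_nonneg (Real.rpow_nonneg ht0.le _)]
    have h1 : ‖R t * x‖ ≤ t⁻¹ * ‖x‖ := by
      calc ‖R t * x‖ ≤ ‖R t‖ * ‖x‖ := norm_mul_le _ _
        _ ≤ (1/t) * ‖x‖ :=
            mul_le_mul_of_nonneg_right (res_bound_real hB ht0) (norm_nonneg x)
        _ = t⁻¹ * ‖x‖ := by rw [one_div]
    calc t ^ (α-1) * ‖R t * x‖ ≤ t ^ (α-1) * (t⁻¹ * ‖x‖) :=
          mul_le_mul_of_nonneg_left h1 (Real.rpow_nonneg ht0.le _)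
      _ = t ^ (α-2) * ‖x‖ := by rw [hsub21 t ht1]; ring
  have hint1 : IntegrableOn f₁ (Set.Ioi 0) := by
    rw [← Set.Ioc_union_Ioi_eq_Ioi (zero_le_one : (0:ℝ) ≤ 1)]
    exact hint1a.union hint1b
  have hinv1le : ∀ t : ℝ, 0 < t → (1+t)⁻¹ ≤ 1 := by
    intro t ht
    rw [inv_le_one_iff₀]
    right; linarith
  have hintsc_a : IntegrableOn sc (Set.Ioc 0 1) := by
    refine Integrable.mono' hrpow_int
      ((hcontsc.mono hIoc_sub).aestronglyMeasurable measurableSet_Ioc) ?_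
    refine (ae_restrict_iff' measurableSet_Ioc).mpr (Filter.Eventually.of_forall (fun t ht => ?_))
    rw [hsc]
    simp only
    have h1t : (0:ℝ) < 1 + t := by have := ht.1; linarith
    rw [Real.norm_eq_abs, abs_mul, abs_of_nonneg (Real.rpow_nonneg ht.1.le _),
      abs_of_nonneg (inv_nonneg.mpr h1t.le)]
    calc t ^ (α-1) * (1+t)⁻¹ ≤ t ^ (α-1) * 1 :=
          mul_le_mul_of_nonneg_left (hinv1le t ht.1) (Real.rpow_nonneg ht.1.le _)
      _ = t ^ (α-1) := mul_one _
  have hscle2 : ∀ t : ℝ, 1 < t → |sc t| ≤ t ^ (α-2) := by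
    intro t ht1
    have ht0 : (0:ℝ) < t := lt_trans zero_lt_one ht1
    rw [hsc]
    simp only
    have h1t : (0:ℝ) < 1 + t := by linarith
    rw [abs_mul, abs_of_nonneg (Real.rpow_nonneg ht0.le _),
      abs_of_nonneg (inv_nonneg.mpr h1t.le)]
    have h2 : (1+t)⁻¹ ≤ t⁻¹ := by
      apply inv_anti₀ ht0
      linarith
    calc t ^ (α-1) * (1+t)⁻¹ ≤ t ^ (α-1) * t⁻¹ :=
          mul_le_mul_of_nonneg_left h2 (Real.rpow_nonneg ht0.le _)
      _ = t ^ (α-2) := (hsub21 t ht1).symm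
  have hintsc_b : IntegrableOn sc (Set.Ioi 1) := by
    refine Integrable.mono' hrpow2_int
      ((hcontsc.mono hIoi_sub).aestronglyMeasurable measurableSet_Ioi) ?_
    refine (ae_restrict_iff' measurableSet_Ioi).mpr (Filter.Eventually.of_forall (fun t ht => ?_))
    rw [Real.norm_eq_abs]
    exact hscle2 t (Set.mem_Ioi.mp ht)
  have hintsc : IntegrableOn sc (Set.Ioi 0) := by
    rw [← Set.Ioc_union_Ioi_eq_Ioi (zero_le_one : (0:ℝ) ≤ 1)]
    exact hintsc_a.union hintsc_b
  have hint2 : IntegrableOn f₂ (Set.Ioi 0) := hintsc.smul_const (1:B)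
  -- pointwise identity
  have hpt : ∀ t ∈ Set.Ioi (0:ℝ), f₁ t - f₂ t = (t^α * (1+t)⁻¹) • (R t * (x - 1)) := by
    intro t ht
    have ht0 : (0:ℝ) < t := Set.mem_Ioi.mp ht
    have h1t : (0:ℝ) < 1 + t := by linarith
    have hmul : R t * (t • (1:B) + x) = 1 :=
      Ring.inverse_mul_cancel _ (isUnit_res_real hB ht0)
    have hexp : t • R t + R t * x = 1 := by
      have h6 : R t * (t • (1:B) + x) = t • R t + R t * x := by
        rw [mul_add, mul_smul_comm, mul_one]
      rw [← h6]
      exact hmul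
    have hta : t ^ α = t ^ (α-1) * t := by
      rw [← Real.rpow_add_one ht0.ne' (α-1)]
      norm_num
    rw [hf₁, hf₂, hsc]
    simp only
    rw [mul_sub, mul_one, hta, ← hexp]
    match_scalars <;> (field_simp; try ring)
  -- integral decomposition
  have hD : ∫ t in Set.Ioi (0:ℝ), f₁ t =
      (∫ t in Set.Ioi (0:ℝ), sc t) • (1:B) + ∫ t in Set.Ioi (0:ℝ), (f₁ t - f₂ t) := by
    rw [integral_sub hint1 hint2]
    have h7 : ∫ t in Set.Ioi (0:ℝ), f₂ t = (∫ t in Set.Ioi (0:ℝ), sc t) • (1:B) := by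
      rw [hf₂]
      exact integral_smul_const sc (1:B)
    rw [h7]
    abel
  -- bound on D
  set D : B := ∫ t in Set.Ioi (0:ℝ), (f₁ t - f₂ t) with hDdef
  have hdiff_int : IntegrableOn (fun t => f₁ t - f₂ t) (Set.Ioi 0) := hint1.sub hint2
  have hDsplit : D = (∫ t in Set.Ioc (0:ℝ) 1, (f₁ t - f₂ t)) +
      ∫ t in Set.Ioi (1:ℝ), (f₁ t - f₂ t) := by
    rw [hDdef, ← Set.Ioc_union_Ioi_eq_Ioi (zero_le_one : (0:ℝ) ≤ 1)]
    exact setIntegral_union (Set.Ioc_disjoint_Ioi le_rfl) measurableSet_Ioi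
      (hdiff_int.mono_set hIoc_sub) (hdiff_int.mono_set hIoi_sub)
  have hb1 : ‖∫ t in Set.Ioc (0:ℝ) 1, (f₁ t - f₂ t)‖ ≤ K * ‖x - 1‖ := by
    have hfin : volume (Set.Ioc (0:ℝ) 1) < ⊤ := by
      rw [Real.volume_Ioc]; exact ENNReal.ofReal_lt_top
    have h := norm_setIntegral_le_of_norm_le_const_ae' (f := fun t => f₁ t - f₂ t)
      (C := K * ‖x - 1‖) hfin ?_
    · calc ‖∫ t in Set.Ioc (0:ℝ) 1, (f₁ t - f₂ t)‖
          ≤ (K * ‖x - 1‖) * (volume (Set.Ioc (0:ℝ) 1)).toReal := h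
        _ = K * ‖x - 1‖ := by rw [Real.volume_Ioc]; norm_num
    · refine Filter.Eventually.of_forall (fun t ht => ?_)
      have ht0 : (0:ℝ) < t := ht.1
      have h1t : (0:ℝ) < 1 + t := by linarith
      show ‖f₁ t - f₂ t‖ ≤ K * ‖x - 1‖
      rw [hpt t (hIoc_sub ht), norm_smul, Real.norm_eq_abs,
        abs_of_nonneg (by positivity : (0:ℝ) ≤ t^α * (1+t)⁻¹)]
      have hle1 : t^α * (1+t)⁻¹ ≤ 1 := by
        have h1 : t^α ≤ 1 := Real.rpow_le_one ht0.le ht.2 hα0.le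
        have h2 : (1+t)⁻¹ ≤ 1 := hinv1le t ht0
        calc t^α * (1+t)⁻¹ ≤ 1 * 1 := by
              apply mul_le_mul h1 h2 (by positivity) zero_le_one
          _ = 1 := one_mul 1
      have hle2 : ‖R t * (x - 1)‖ ≤ K * ‖x - 1‖ := by
        calc ‖R t * (x - 1)‖ ≤ ‖R t‖ * ‖x - 1‖ := norm_mul_le _ _
          _ ≤ K * ‖x - 1‖ := mul_le_mul_of_nonneg_right (hK t ht0) (norm_nonneg _)
      calc t^α * (1+t)⁻¹ * ‖R t * (x - 1)‖ ≤ 1 * (K * ‖x - 1‖) := by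
            apply mul_le_mul hle1 hle2 (norm_nonneg _) zero_le_one
        _ = K * ‖x - 1‖ := one_mul _
  have hval2 : ∫ t in Set.Ioi (1:ℝ), t ^ (α-2) = 1/(1-α) := by
    rw [integral_Ioi_rpow_of_lt (by linarith : α-2 < -1) zero_lt_one]
    rw [show α-2+1 = α-1 by ring, Real.one_rpow]
    rw [div_eq_div_iff (by linarith : α - 1 ≠ 0) (by linarith : 1 - α ≠ 0)]
    ring
  have hval2le : (1:ℝ)/(1-α) ≤ 2 := by
    rw [div_le_iff₀ (by linarith : (0:ℝ) < 1-α)]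
    linarith
  have hb2 : ‖∫ t in Set.Ioi (1:ℝ), (f₁ t - f₂ t)‖ ≤ 2 * ‖x - 1‖ := by
    have hgint : Integrable (fun t : ℝ => ‖x - 1‖ * t ^ (α-2))
        (volume.restrict (Set.Ioi 1)) := hrpow2_int.const_mul _
    have h := norm_integral_le_of_norm_le (f := fun t => f₁ t - f₂ t) hgint ?_
    · calc ‖∫ t in Set.Ioi (1:ℝ), (f₁ t - f₂ t)‖
          ≤ ∫ t in Set.Ioi (1:ℝ), ‖x - 1‖ * t ^ (α-2) := h
        _ = ‖x - 1‖ * ∫ t in Set.Ioi (1:ℝ), t ^ (α-2) := integral_const_mul _ _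
        _ = ‖x - 1‖ * (1/(1-α)) := by rw [hval2]
        _ ≤ ‖x - 1‖ * 2 := mul_le_mul_of_nonneg_left hval2le (norm_nonneg _)
        _ = 2 * ‖x - 1‖ := mul_comm _ _
    · refine (ae_restrict_iff' measurableSet_Ioi).mpr
        (Filter.Eventually.of_forall (fun t ht => ?_))
      have ht1 : (1:ℝ) < t := Set.mem_Ioi.mp ht
      have ht0 : (0:ℝ) < t := lt_trans zero_lt_one ht1
      have h1t : (0:ℝ) < 1 + t := by linarith
      show ‖f₁ t - f₂ t‖ ≤ ‖x - 1‖ * t ^ (α-2)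
      rw [hpt t (hIoi_sub ht), norm_smul, Real.norm_eq_abs,
        abs_of_nonneg (by positivity : (0:ℝ) ≤ t^α * (1+t)⁻¹)]
      have hchain1 : t^α * (1+t)⁻¹ ≤ t^(α-1) := by
        have h2 : (1+t)⁻¹ ≤ t⁻¹ := by
          apply inv_anti₀ ht0
          linarith
        have h3 : t^α * t⁻¹ = t^(α-1) := by
          rw [show α-1 = α + (-1) by ring, Real.rpow_add ht0, Real.rpow_neg_one]
        calc t^α * (1+t)⁻¹ ≤ t^α * t⁻¹ :=
              mul_le_mul_of_nonneg_left h2 (Real.rpow_nonneg ht0.le _)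
          _ = t^(α-1) := h3
      have hchain2 : ‖R t * (x - 1)‖ ≤ t⁻¹ * ‖x - 1‖ := by
        calc ‖R t * (x - 1)‖ ≤ ‖R t‖ * ‖x - 1‖ := norm_mul_le _ _
          _ ≤ (1/t) * ‖x - 1‖ :=
              mul_le_mul_of_nonneg_right (res_bound_real hB ht0) (norm_nonneg _)
          _ = t⁻¹ * ‖x - 1‖ := by rw [one_div]
      calc t^α * (1+t)⁻¹ * ‖R t * (x - 1)‖
          ≤ t^(α-1) * (t⁻¹ * ‖x - 1‖) := by
            apply mul_le_mul hchain1 hchain2 (norm_nonneg _) (Real.rpow_nonneg ht0.le _)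
        _ = ‖x - 1‖ * t^(α-2) := by rw [hsub21 t ht1]; ring
  have hDb : ‖D‖ ≤ ‖x - 1‖ * (K + 2) := by
    rw [hDsplit]
    calc ‖(∫ t in Set.Ioc (0:ℝ) 1, (f₁ t - f₂ t)) + ∫ t in Set.Ioi (1:ℝ), (f₁ t - f₂ t)‖
        ≤ ‖∫ t in Set.Ioc (0:ℝ) 1, (f₁ t - f₂ t)‖ + ‖∫ t in Set.Ioi (1:ℝ), (f₁ t - f₂ t)‖ :=
          norm_add_le _ _
      _ ≤ K * ‖x - 1‖ + 2 * ‖x - 1‖ := add_le_add hb1 hb2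
      _ = ‖x - 1‖ * (K + 2) := by ring
  -- scalar integral estimate
  set I : ℝ := ∫ t in Set.Ioi (0:ℝ), sc t with hIdef
  have hIsplit : I = (∫ t in Set.Ioc (0:ℝ) 1, sc t) + ∫ t in Set.Ioi (1:ℝ), sc t := by
    rw [hIdef, ← Set.Ioc_union_Ioi_eq_Ioi (zero_le_one : (0:ℝ) ≤ 1)]
    exact setIntegral_union (Set.Ioc_disjoint_Ioi le_rfl) measurableSet_Ioi
      (hintsc.mono_set hIoc_sub) (hintsc.mono_set hIoi_sub)
  have hca : ContinuousOn (fun t : ℝ => t^α * (1+t)⁻¹) (Set.Ioi 0) := by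
    apply ContinuousOn.mul
    · exact continuousOn_id.rpow_const (fun t ht => Or.inl (ne_of_gt (Set.mem_Ioi.mp ht)))
    · apply ContinuousOn.inv₀ (continuous_const.add continuous_id).continuousOn
      intro t ht
      have := Set.mem_Ioi.mp ht
      exact ne_of_gt (show (0:ℝ) < 1 + t by linarith)
  have hfin : volume (Set.Ioc (0:ℝ) 1) < ⊤ := by
    rw [Real.volume_Ioc]; exact ENNReal.ofReal_lt_top
  have hone_int : IntegrableOn (fun t : ℝ => t^α * (1+t)⁻¹) (Set.Ioc 0 1) := by
    refine Integrable.mono' (g := fun _ : ℝ => (1:ℝ)) ?_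
      ((hca.mono hIoc_sub).aestronglyMeasurable measurableSet_Ioc) ?_
    · exact integrableOn_const hfin.ne
    · refine (ae_restrict_iff' measurableSet_Ioc).mpr
        (Filter.Eventually.of_forall (fun t ht => ?_))
      have ht0 : (0:ℝ) < t := ht.1
      have h1t : (0:ℝ) < 1 + t := by linarith
      rw [Real.norm_eq_abs, abs_of_nonneg (by positivity : (0:ℝ) ≤ t^α * (1+t)⁻¹)]
      have h1 : t^α ≤ 1 := Real.rpow_le_one ht0.le ht.2 hα0.le
      have h2 : (1+t)⁻¹ ≤ 1 := hinv1le t ht0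
      calc t^α * (1+t)⁻¹ ≤ 1 * 1 := by
            apply mul_le_mul h1 h2 (by positivity) zero_le_one
        _ = 1 := one_mul 1
  have hIoc_eq : ∫ t in Set.Ioc (0:ℝ) 1, sc t =
      1/α - ∫ t in Set.Ioc (0:ℝ) 1, (t^α * (1+t)⁻¹) := by
    have hptsc : Set.EqOn sc (fun t => t^(α-1) - t^α * (1+t)⁻¹) (Set.Ioc 0 1) := by
      intro t ht
      have ht0 : (0:ℝ) < t := ht.1
      have h1t : (0:ℝ) < 1 + t := by linarith
      have hta : t ^ α = t ^ (α-1) * t := by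
        rw [← Real.rpow_add_one ht0.ne' (α-1)]
        norm_num
      rw [hsc]
      simp only
      rw [hta]
      field_simp
      try ring
    rw [setIntegral_congr_fun measurableSet_Ioc hptsc,
      integral_sub hrpow_int hone_int]
    congr 1
    rw [← intervalIntegral.integral_of_le zero_le_one,
      integral_rpow (Or.inl (by linarith : (-1:ℝ) < α-1)),
      show α-1+1 = α by ring, Real.one_rpow, Real.zero_rpow hα0.ne']
    norm_num
  have hA : |∫ t in Set.Ioc (0:ℝ) 1, (t^α * (1+t)⁻¹)| ≤ 1 := by
    have h := norm_setIntegral_le_of_norm_le_const_ae' (f := fun t : ℝ => t^α * (1+t)⁻¹)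
      (C := 1) hfin ?_
    · rw [← Real.norm_eq_abs]
      calc ‖∫ t in Set.Ioc (0:ℝ) 1, (t^α * (1+t)⁻¹)‖
          ≤ 1 * (volume (Set.Ioc (0:ℝ) 1)).toReal := h
        _ = 1 := by rw [Real.volume_Ioc]; norm_num
    · refine Filter.Eventually.of_forall (fun t ht => ?_)
      have ht0 : (0:ℝ) < t := ht.1
      have h1t : (0:ℝ) < 1 + t := by linarith
      rw [Real.norm_eq_abs, abs_of_nonneg (by positivity : (0:ℝ) ≤ t^α * (1+t)⁻¹)]
      have h1 : t^α ≤ 1 := Real.rpow_le_one ht0.le ht.2 hα0.le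
      have h2 : (1+t)⁻¹ ≤ 1 := hinv1le t ht0
      calc t^α * (1+t)⁻¹ ≤ 1 * 1 := by
            apply mul_le_mul h1 h2 (by positivity) zero_le_one
        _ = 1 := one_mul 1
  have hB2 : |∫ t in Set.Ioi (1:ℝ), sc t| ≤ 2 := by
    have h := norm_integral_le_of_norm_le (f := sc) (hrpow2_int)
      ((ae_restrict_iff' measurableSet_Ioi).mpr
        (Filter.Eventually.of_forall (fun t ht => by
          rw [Real.norm_eq_abs]
          exact hscle2 t (Set.mem_Ioi.mp ht))))
    rw [← Real.norm_eq_abs]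
    calc ‖∫ t in Set.Ioi (1:ℝ), sc t‖ ≤ ∫ t in Set.Ioi (1:ℝ), t ^ (α-2) := h
      _ = 1/(1-α) := hval2
      _ ≤ 2 := hval2le
  have hIest : |I - 1/α| ≤ 3 := by
    have h12 : I - 1/α = (∫ t in Set.Ioi (1:ℝ), sc t) -
        ∫ t in Set.Ioc (0:ℝ) 1, (t^α * (1+t)⁻¹) := by
      rw [hIsplit, hIoc_eq]
      ring
    rw [h12, sub_eq_add_neg]
    have h13 := abs_add_le (∫ t in Set.Ioi (1:ℝ), sc t)
      (-∫ t in Set.Ioc (0:ℝ) 1, (t^α * (1+t)⁻¹))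
    rw [abs_neg] at h13
    linarith
  -- final assembly
  set sn : ℝ := Real.sin (α * Real.pi) with hsn
  have hbal : balPow x α = ((sn/Real.pi) * I) • (1:B) + (sn/Real.pi) • D := by
    show (Real.sin (α * Real.pi) / Real.pi) •
        (∫ t in Set.Ioi (0 : ℝ), t ^ (α - 1) • (Ring.inverse (t • (1 : B) + x) * x)) = _
    rw [show (∫ t in Set.Ioi (0:ℝ), t ^ (α - 1) • (Ring.inverse (t • (1:B) + x) * x))
        = ∫ t in Set.Ioi (0:ℝ), f₁ t from rfl]
    rw [hD, smul_add, smul_smul]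
  have hnorm : ‖balPow x α - 1‖ ≤ |sn/Real.pi * I - 1| + |sn|/Real.pi * ‖D‖ := by
    have h9 : balPow x α - 1 = ((sn/Real.pi) * I - 1) • (1:B) + (sn/Real.pi) • D := by
      rw [hbal]
      module
    rw [h9]
    calc ‖((sn/Real.pi) * I - 1) • (1:B) + (sn/Real.pi) • D‖
        ≤ ‖((sn/Real.pi) * I - 1) • (1:B)‖ + ‖(sn/Real.pi) • D‖ := norm_add_le _ _
      _ = |sn/Real.pi * I - 1| + |sn/Real.pi| * ‖D‖ := by
          rw [norm_smul, norm_smul, norm_one, mul_one, Real.norm_eq_abs, Real.norm_eq_abs]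
      _ = |sn/Real.pi * I - 1| + |sn|/Real.pi * ‖D‖ := by
          rw [abs_div, abs_of_pos hπ]
  have h10 : |sn/Real.pi * I - 1| ≤ |sn/(Real.pi*α) - 1| + |sn|/Real.pi * 3 := by
    have h11 : sn/Real.pi * I - 1 = (sn/(Real.pi*α) - 1) + (sn/Real.pi) * (I - 1/α) := by
      field_simp
      ring
    rw [h11]
    have h14 := abs_add_le (sn/(Real.pi*α) - 1) ((sn/Real.pi) * (I - 1/α))
    have h15 : |(sn/Real.pi) * (I - 1/α)| ≤ |sn|/Real.pi * 3 := by
      rw [abs_mul, abs_div, abs_of_pos hπ]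
      exact mul_le_mul_of_nonneg_left hIest (by positivity)
    linarith
  have h16 : |sn|/Real.pi * ‖D‖ ≤ |sn|/Real.pi * (‖x - 1‖ * (K + 2)) :=
    mul_le_mul_of_nonneg_left hDb (by positivity)
  calc ‖balPow x α - 1‖ ≤ |sn/Real.pi * I - 1| + |sn|/Real.pi * ‖D‖ := hnorm
    _ ≤ (|sn/(Real.pi*α) - 1| + |sn|/Real.pi * 3) + |sn|/Real.pi * (‖x - 1‖ * (K + 2)) := by
        apply add_le_add h10 h16
    _ = |sn|/Real.pi * (‖x - 1‖ * (K + 2) + 3) + |sn/(Real.pi*α) - 1| := by ring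

end Aux7

/-- Let `A` be a unital Banach algebra (a closed subalgebra `S` of a
unital Banach algebra `B`, with its own unit `u`, possibly `≠ 1_B`) such that every
element of `A` accretive in `A` is accretive in `B`.  If `x ∈ A` is accretive (in `A`),
then `x` is invertible in `B` if and only if the closed subalgebra generated by `x`
contains `1_B`, and in this case the support idempotent `s(x)` equals `1_B` (the roots
`x^{1/n}` converge in norm to `1_B`). -/
theorem invertible_iff_one_mem_closure_adjoin
    {B : Type*} [NormedRing B] [NormedAlgebra ℂ B] [NormOneClass B] [CompleteSpace B]
    (S : NonUnitalSubalgebra ℂ B) (hSc : IsClosed (S : Set B))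
    (u : B) (hu : u ∈ S) (huid : ∀ a ∈ S, u * a = a ∧ a * u = a)
    (hacc : ∀ a : S,
      (∀ φ : StrongDual ℂ S, ‖φ‖ = 1 → φ ⟨u, hu⟩ = 1 → 0 ≤ (φ a).re) →
      (∀ ψ : StrongDual ℂ B, ‖ψ‖ = 1 → ψ 1 = 1 → 0 ≤ (ψ (a : B)).re))
    (x : B) (hxS : x ∈ S)
    (hx : ∀ φ : StrongDual ℂ S, ‖φ‖ = 1 → φ ⟨u, hu⟩ = 1 → 0 ≤ (φ ⟨x, hxS⟩).re) :
    (IsUnit x ↔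
      (1 : B) ∈ closure ((NonUnitalAlgebra.adjoin ℂ {x} : NonUnitalSubalgebra ℂ B) : Set B)) ∧
    (IsUnit x →
      Tendsto (fun n : ℕ => balPow x (1 / (n : ℝ))) atTop (nhds (1 : B))) := by
  have hBacc : ∀ ψ : StrongDual ℂ B, ‖ψ‖ = 1 → ψ 1 = 1 → 0 ≤ (ψ x).re :=
    hacc ⟨x, hxS⟩ hx
  constructor
  · constructor
    · intro hxu
      exact one_mem_closure hBacc hxu
    · intro h1M
      exact isUnit_of_one_mem (huid x hxS).1 (huid x hxS).2 h1M
  · intro hxu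
    have hπ := Real.pi_pos
    set C : ℝ := ‖x - 1‖ * ((2 * ‖(↑hxu.unit⁻¹ : B)‖ + 2) + 2) + 3 with hC
    rw [← tendsto_sub_nhds_zero_iff]
    have hb : ∀ᶠ n : ℕ in atTop, ‖balPow x (1/(n:ℝ)) - 1‖ ≤
        |Real.sin ((1/(n:ℝ)) * Real.pi)| / Real.pi * C
        + |Real.sin ((1/(n:ℝ)) * Real.pi) / (Real.pi * (1/(n:ℝ))) - 1| := by
      filter_upwards [Filter.eventually_ge_atTop 2] with n hn
      have hn2 : (2:ℝ) ≤ (n:ℝ) := by exact_mod_cast hn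
      have hn0 : (0:ℝ) < 1/(n:ℝ) := by positivity
      have hn12 : (1:ℝ)/(n:ℝ) ≤ 1/2 := by
        rw [div_le_div_iff₀ (by linarith) (by norm_num)]
        linarith
      exact balPow_est hBacc hxu hn0 hn12
    refine squeeze_zero_norm' hb ?_
    -- the bound tends to zero
    have t1 : Tendsto (fun n : ℕ => (1/(n:ℝ)) * Real.pi) atTop (nhds 0) := by
      have := tendsto_one_div_atTop_nhds_zero_nat.mul_const Real.pi
      simpa using this
    have s1 : Tendsto (fun n : ℕ => Real.sin ((1/(n:ℝ)) * Real.pi)) atTop (nhds 0) := by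
      have := (Real.continuous_sin.tendsto 0).comp t1
      simpa [Function.comp_def] using this
    have T1 : Tendsto (fun n : ℕ => |Real.sin ((1/(n:ℝ)) * Real.pi)| / Real.pi * C)
        atTop (nhds 0) := by
      have h1 : Tendsto (fun n : ℕ => |Real.sin ((1/(n:ℝ)) * Real.pi)|) atTop (nhds 0) := by
        have := (continuous_abs.tendsto 0).comp s1
        simpa [Function.comp_def] using this
      have := (h1.div_const Real.pi).mul_const C
      simpa using this
    have hslope : Tendsto (fun y : ℝ => Real.sin y / y) (nhdsWithin 0 {0}ᶜ) (nhds 1) := by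
      have hd : HasDerivAt Real.sin (Real.cos 0) 0 := Real.hasDerivAt_sin 0
      rw [hasDerivAt_iff_tendsto_slope] at hd
      have heq : (slope Real.sin 0) = (fun y : ℝ => Real.sin y / y) := by
        funext y
        rw [slope_def_field]
        simp [Real.sin_zero]
      rw [heq, Real.cos_zero] at hd
      exact hd
    have t2 : Tendsto (fun n : ℕ => (1/(n:ℝ)) * Real.pi) atTop (nhdsWithin 0 {0}ᶜ) := by
      rw [tendsto_nhdsWithin_iff]
      refine ⟨t1, ?_⟩
      filter_upwards [Filter.eventually_ge_atTop 1] with n hn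
      have hn1 : (1:ℝ) ≤ (n:ℝ) := by exact_mod_cast hn
      have : (0:ℝ) < (1/(n:ℝ)) * Real.pi := by positivity
      simp only [Set.mem_compl_iff, Set.mem_singleton_iff]
      linarith
    have s2 : Tendsto (fun n : ℕ =>
        Real.sin ((1/(n:ℝ)) * Real.pi) / ((1/(n:ℝ)) * Real.pi)) atTop (nhds 1) :=
      hslope.comp t2
    have T2 : Tendsto (fun n : ℕ =>
        |Real.sin ((1/(n:ℝ)) * Real.pi) / (Real.pi * (1/(n:ℝ))) - 1|) atTop (nhds 0) := by
      have h3 : Tendsto (fun n : ℕ =>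
          Real.sin ((1/(n:ℝ)) * Real.pi) / (Real.pi * (1/(n:ℝ))) - 1) atTop (nhds 0) := by
        have h4 := s2.sub_const 1
        have heq3 : (fun n : ℕ => Real.sin ((1/(n:ℝ)) * Real.pi) / (Real.pi * (1/(n:ℝ))) - 1) =
            (fun n : ℕ => Real.sin ((1/(n:ℝ)) * Real.pi) / ((1/(n:ℝ)) * Real.pi) - 1) := by
          funext n
          rw [mul_comm Real.pi (1/(n:ℝ))]
        rw [heq3]
        simpa using h4
      have := (continuous_abs.tendsto 0).comp h3
      simpa [Function.comp_def] using this
    have := T1.add T2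
    simpa using this
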